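/- Let ξ be an arithmetic function and M_ξ ≥ 0 with Σ_{n≥1} |ξ(n)|/n^{1/2} ≤ M_ξ. Then for every real T ≥ 1, Σ_{T ≤ n < 2T} (1*ξ)(n)/n = (log 2) · Σ_{n≥1} ξ(n)/n + O(M_ξ / T^{1/2}), where 1*ξ denotes Dirichlet convolution with the constant function 1, i.e. (1*ξ)(n) = Σ_{d|n} ξ(d). -/

import Mathlib

open Finset

lemma harm_lb (a : ℕ) (ha : 1 ≤ a) : ∀ b, a ≤ b →
    Real.log b - Real.log a ≤ ∑ m ∈ Finset.Ico a b, (1 / (m:ℝ)) := by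
  refine Nat.le_induction ?_ ?_
  · simp
  · intro b hab ih
    rw [Finset.sum_Ico_succ_top hab]
    have hb : (0:ℝ) < b := by exact_mod_cast Nat.lt_of_lt_of_le ha hab
    have key : Real.log (b+1) - Real.log b ≤ 1 / b := by
      rw [← Real.log_div (by positivity) (by positivity)]
      have := Real.log_le_sub_one_of_pos (x := ((b:ℝ)+1)/b) (by positivity)
      calc Real.log ((b+1)/(b:ℝ)) ≤ (b+1)/(b:ℝ) - 1 := this
        _ = 1 / b := by field_simp; ring
    push_cast
    linarith

lemma harm_ub (a : ℕ) (ha : 1 ≤ a) : ∀ b, a ≤ b →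
    ∑ m ∈ Finset.Ico a b, (1 / (m:ℝ)) ≤ 1/a - 1/b + (Real.log b - Real.log a) := by
  refine Nat.le_induction ?_ ?_
  · simp
  · intro b hab ih
    rw [Finset.sum_Ico_succ_top hab]
    have hb : (0:ℝ) < b := by exact_mod_cast Nat.lt_of_lt_of_le ha hab
    have key : 1 / ((b:ℝ)+1) ≤ Real.log (b+1) - Real.log b := by
      rw [← Real.log_div (by positivity) (by positivity)]
      have := Real.log_le_sub_one_of_pos (x := (b:ℝ)/(b+1)) (by positivity)
      have h2 : Real.log ((b:ℝ)/(b+1)) ≤ -(1/((b:ℝ)+1)) := by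
        calc Real.log ((b:ℝ)/(b+1)) ≤ (b:ℝ)/(b+1) - 1 := this
          _ = -(1/((b:ℝ)+1)) := by field_simp; ring
      have h3 : Real.log ((b:ℝ)/(b+1)) = - Real.log ((b+1)/(b:ℝ)) := by
        rw [← Real.log_inv]; congr 1; field_simp
      linarith [h3 ▸ h2]
    push_cast
    linarith

set_option maxHeartbeats 1000000 in
lemma key_est (T : ℝ) (hT : 1 ≤ T) (d : ℕ) (hd : 1 ≤ d) :
    |(∑ m ∈ Finset.Ico ⌈T/(d:ℝ)⌉₊ ⌈2*T/(d:ℝ)⌉₊, (1/(m:ℝ))) - Real.log 2|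
      ≤ 7 * Real.sqrt d / Real.sqrt T := by
  have hd0 : (0:ℝ) < d := by exact_mod_cast hd
  have hT0 : (0:ℝ) < T := by linarith
  have hsT : (0:ℝ) < Real.sqrt T := Real.sqrt_pos.mpr hT0
  have hsd : (0:ℝ) < Real.sqrt d := Real.sqrt_pos.mpr hd0
  set a := ⌈T/(d:ℝ)⌉₊ with ha_def
  set b := ⌈2*T/(d:ℝ)⌉₊ with hb_def
  have ha0 : 0 < a := Nat.ceil_pos.mpr (by positivity)
  have haT : (a:ℝ) < T/d + 1 := Nat.ceil_lt_add_one (by positivity)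
  have haT' : T/d ≤ (a:ℝ) := Nat.le_ceil _
  have hbT : 2*T/d ≤ (b:ℝ) := Nat.le_ceil _
  have hbT' : (b:ℝ) < 2*T/d + 1 := Nat.ceil_lt_add_one (by positivity)
  have hlog2 : Real.log 2 ≤ 1 := by
    have := Real.log_le_sub_one_of_pos (x := (2:ℝ)) (by norm_num); linarith
  have hlog2' : 0 < Real.log 2 := Real.log_pos (by norm_num)
  by_cases hcase : 2*(d:ℝ) ≤ T
  · -- main case
    have h2eq : 2*T/(d:ℝ) = 2*(T/(d:ℝ)) := by ring
    have h1 : T/(d:ℝ) ≥ 2 := by rw [ge_iff_le, le_div_iff₀ hd0]; linarith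
    have hab : a ≤ b := by
      have : (a:ℝ) < b := by linarith
      exact_mod_cast this.le
    have ha0' : (0:ℝ) < a := by exact_mod_cast ha0
    have hb0' : (0:ℝ) < b := by linarith
    have lower := harm_lb a ha0 b hab
    have upper := harm_ub a ha0 b hab
    have h1a : 1/(a:ℝ) ≤ (d:ℝ)/T := by
      rw [div_le_div_iff₀ ha0' hT0]
      calc (1:ℝ)*T = (T/d)*d := by field_simp
        _ ≤ (a:ℝ)*d := by nlinarith
        _ = (d:ℝ)*a := mul_comm _ _
    have hlogb_ub : Real.log b ≤ Real.log (2*T/d+1) := Real.log_le_log hb0' hbT'.le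
    have hloga_lb : Real.log (T/d) ≤ Real.log a := Real.log_le_log (by positivity) haT'
    have hlogb_lb : Real.log (2*T/d) ≤ Real.log b := Real.log_le_log (by positivity) hbT
    have hloga_ub : Real.log a ≤ Real.log (T/d+1) := Real.log_le_log ha0' haT.le
    have hsplit : Real.log (2*T/(d:ℝ)) = Real.log 2 + Real.log (T/(d:ℝ)) := by
      rw [h2eq, Real.log_mul (by norm_num) (by positivity)]
    have e_up : Real.log (2*T/d+1) - Real.log (2*T/d) ≤ (d:ℝ)/(2*T) := by
      have h := Real.log_le_sub_one_of_pos (x := (2*T/(d:ℝ)+1)/(2*T/(d:ℝ))) (by positivity)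
      rw [Real.log_div (by positivity) (by positivity)] at h
      have heq2 : (2*T/(d:ℝ)+1)/(2*T/(d:ℝ)) - 1 = (d:ℝ)/(2*T) := by field_simp; ring
      linarith
    have e_lo : Real.log (T/d+1) - Real.log (T/d) ≤ (d:ℝ)/T := by
      have h := Real.log_le_sub_one_of_pos (x := (T/(d:ℝ)+1)/(T/(d:ℝ))) (by positivity)
      rw [Real.log_div (by positivity) (by positivity)] at h
      have heq2 : (T/(d:ℝ)+1)/(T/(d:ℝ)) - 1 = (d:ℝ)/T := by field_simp; ring
      linarith
    have hb0pos : (0:ℝ) < 1/(b:ℝ) := by positivity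
    have hhalf : (d:ℝ)/(2*T) = ((d:ℝ)/T)/2 := by ring
    have habs : |(∑ m ∈ Finset.Ico a b, (1/(m:ℝ))) - Real.log 2| ≤ 3/2 * ((d:ℝ)/T) := by
      rw [abs_le]
      constructor
      · linarith
      · linarith
    have hdT : (d:ℝ)/T ≤ Real.sqrt d / Real.sqrt T := by
      rw [div_le_div_iff₀ hT0 hsT]
      have hm1 : (d:ℝ) = Real.sqrt d * Real.sqrt d := (Real.mul_self_sqrt hd0.le).symm
      have hm2 : T = Real.sqrt T * Real.sqrt T := (Real.mul_self_sqrt hT0.le).symm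
      have hm3 : Real.sqrt d ≤ Real.sqrt T := Real.sqrt_le_sqrt (by linarith)
      nlinarith [mul_le_mul_of_nonneg_left hm3 (mul_nonneg hsd.le hsT.le)]
    calc |(∑ m ∈ Finset.Ico a b, (1/(m:ℝ))) - Real.log 2| ≤ 3/2 * ((d:ℝ)/T) := habs
      _ ≤ 3/2 * (Real.sqrt d / Real.sqrt T) := by linarith
      _ ≤ 7 * Real.sqrt d / Real.sqrt T := by
          rw [mul_div_assoc]
          have : (0:ℝ) ≤ Real.sqrt d / Real.sqrt T := by positivity
          linarith
  · -- d > T/2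
    push_neg at hcase
    have hS0 : (0:ℝ) ≤ ∑ m ∈ Finset.Ico a b, (1/(m:ℝ)) := by
      apply Finset.sum_nonneg; intro m _; positivity
    have hb4 : b ≤ 4 := by
      rw [hb_def]
      apply Nat.ceil_le.mpr
      rw [div_le_iff₀ hd0]
      push_cast
      linarith
    have hS3 : (∑ m ∈ Finset.Ico a b, (1/(m:ℝ))) ≤ 3 := by
      have hstep : (∑ m ∈ Finset.Ico a b, (1/(m:ℝ))) ≤ ∑ m ∈ Finset.Ico a b, (1:ℝ) := by
        refine Finset.sum_le_sum fun m hm => ?_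
        have hm1 : 1 ≤ m := le_trans ha0 (Finset.mem_Ico.mp hm).1
        have hm2 : (1:ℝ) ≤ m := by exact_mod_cast hm1
        rw [div_le_one (by linarith)]; exact hm2
      have hcard : (∑ m ∈ Finset.Ico a b, (1:ℝ)) = ((b - a : ℕ) : ℝ) := by
        rw [Finset.sum_const, Nat.card_Ico, nsmul_eq_mul, mul_one]
      have h3 : b - a ≤ 3 := by omega
      have h3' : ((b - a : ℕ) : ℝ) ≤ 3 := by exact_mod_cast h3
      linarith
    have h4 : (4:ℝ) ≤ 7 * Real.sqrt d / Real.sqrt T := by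
      rw [le_div_iff₀ hsT]
      have h16 : 16 * T ≤ 49 * (d:ℝ) := by linarith
      have hs := Real.sqrt_le_sqrt h16
      rw [show (16:ℝ)*T = 4^2*T by norm_num, show (49:ℝ)*(d:ℝ) = 7^2*(d:ℝ) by norm_num,
        Real.sqrt_mul (by positivity) T, Real.sqrt_mul (by positivity) (d:ℝ),
        Real.sqrt_sq (by norm_num : (0:ℝ) ≤ 4), Real.sqrt_sq (by norm_num : (0:ℝ) ≤ 7)] at hs
      linarith
    rw [abs_le]
    constructor
    · linarith
    · linarith


lemma swap_lemma (ξ : ℕ → ℂ) (T : ℝ) (hT : 1 ≤ T) :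
    (∑ n ∈ Finset.Ico ⌈T⌉₊ ⌈2*T⌉₊, (∑ d ∈ n.divisors, ξ d) / (n:ℂ))
      = ∑ d ∈ Finset.Ico 1 ⌈2*T⌉₊,
          ∑ m ∈ Finset.Ico ⌈T/(d:ℝ)⌉₊ ⌈2*T/(d:ℝ)⌉₊, ξ d / ((d:ℂ)*(m:ℂ)) := by
  have hT0 : (0:ℝ) < T := by linarith
  have step1 : ∀ n : ℕ, (∑ d ∈ n.divisors, ξ d) / (n:ℂ)
      = ∑ p ∈ n.divisorsAntidiagonal, ξ p.1 / (n:ℂ) := by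
    intro n
    rw [Finset.sum_div]
    exact (Nat.sum_divisorsAntidiagonal (fun d m => ξ d / (n:ℂ))).symm
  simp_rw [step1]
  rw [Finset.sum_sigma', Finset.sum_sigma']
  refine Finset.sum_nbij' (fun x => ⟨x.2.1, x.2.2⟩) (fun y => ⟨y.1 * y.2, (y.1, y.2)⟩)
    ?_ ?_ ?_ ?_ ?_
  · rintro ⟨n, d, m⟩ hx
    simp only [Finset.mem_sigma, Finset.mem_Ico, Nat.mem_divisorsAntidiagonal] at hx ⊢
    obtain ⟨⟨hn1, hn2⟩, hdm, hn0⟩ := hx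
    have hd0 : d ≠ 0 := by rintro rfl; simp at hdm; exact hn0 hdm.symm
    have hm0 : m ≠ 0 := by rintro rfl; simp at hdm; exact hn0 hdm.symm
    have hd0' : (0:ℝ) < d := by positivity
    have hTn : T ≤ (n:ℝ) := Nat.ceil_le.mp hn1
    have hn2T : (n:ℝ) < 2*T := Nat.lt_ceil.mp hn2
    have hcast : ((d:ℝ)) * m = (n:ℝ) := by exact_mod_cast congrArg (Nat.cast : ℕ → ℝ) hdm
    refine ⟨⟨Nat.one_le_iff_ne_zero.mpr hd0, ?_⟩, ?_, ?_⟩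
    · calc d ≤ d * m := Nat.le_mul_of_pos_right d (Nat.pos_of_ne_zero hm0)
        _ = n := hdm
        _ < ⌈2*T⌉₊ := hn2
    · rw [Nat.ceil_le, div_le_iff₀ hd0']
      rw [mul_comm] at hcast
      linarith [hcast ▸ hTn]
    · rw [Nat.lt_ceil, lt_div_iff₀ hd0']
      rw [mul_comm ((d:ℝ)) ((m:ℝ))] at hcast
      linarith [hcast ▸ hn2T]
  · rintro ⟨d, m⟩ hy
    simp only [Finset.mem_sigma, Finset.mem_Ico, Nat.mem_divisorsAntidiagonal] at hy ⊢
    obtain ⟨⟨hd1, _⟩, hm1, hm2⟩ := hy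
    have hd0' : (0:ℝ) < d := by positivity
    have hm0 : 0 < m := lt_of_lt_of_le (Nat.ceil_pos.mpr (by positivity)) hm1
    have hTm : T/(d:ℝ) ≤ m := Nat.ceil_le.mp hm1
    have hm2T : (m:ℝ) < 2*T/(d:ℝ) := Nat.lt_ceil.mp hm2
    have h1 : T ≤ ((d*m : ℕ) : ℝ) := by
      push_cast
      rw [div_le_iff₀ hd0'] at hTm
      linarith
    have h2 : ((d*m : ℕ) : ℝ) < 2*T := by
      push_cast
      rw [lt_div_iff₀ hd0'] at hm2T
      linarith
    exact ⟨⟨Nat.ceil_le.mpr h1, Nat.lt_ceil.mpr h2⟩, trivial, by positivity⟩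
  · rintro ⟨n, d, m⟩ hx
    simp only [Finset.mem_sigma, Nat.mem_divisorsAntidiagonal] at hx
    exact Sigma.ext hx.2.1 (by simp)
  · rintro ⟨d, m⟩ _
    rfl
  · rintro ⟨n, d, m⟩ hx
    simp only [Finset.mem_sigma, Nat.mem_divisorsAntidiagonal] at hx
    obtain ⟨_, hdm, _⟩ := hx
    simp only
    rw [← hdm]
    push_cast
    ring

set_option maxHeartbeats 1000000 in
theorem dyadic_sum_dirichlet_convolution_div :
    ∃ C > 0, ∀ (ξ : ℕ → ℂ) (M : ℝ),
      Summable (fun n : ℕ => ‖ξ n‖ / Real.sqrt n) →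
      (∑' n : ℕ, ‖ξ n‖ / Real.sqrt n) ≤ M →
      ∀ T : ℝ, 1 ≤ T →
      ‖(∑ n ∈ Finset.Ico ⌈T⌉₊ ⌈2 * T⌉₊,
            (∑ d ∈ n.divisors, ξ d) / (n : ℂ))
          - (Real.log 2 : ℂ) * ∑' n : ℕ, ξ n / (n : ℂ)‖
        ≤ C * M / Real.sqrt T := by
  refine ⟨8, by norm_num, ?_⟩
  intro ξ M hsum hM T hT
  have hT0 : (0:ℝ) < T := by linarith
  have hsT : (0:ℝ) < Real.sqrt T := Real.sqrt_pos.mpr hT0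
  have hM0 : 0 ≤ M := le_trans (tsum_nonneg (fun n => by positivity)) hM
  have hlog2 : Real.log 2 ≤ 1 := by
    have := Real.log_le_sub_one_of_pos (x := (2:ℝ)) (by norm_num); linarith
  have hlog2' : 0 < Real.log 2 := Real.log_pos (by norm_num)
  -- summability of ξ n / n
  have hcomp : ∀ n : ℕ, ‖ξ n / (n:ℂ)‖ ≤ ‖ξ n‖ / Real.sqrt n := by
    intro n
    rcases Nat.eq_zero_or_pos n with h0 | h1
    · subst h0; simp
    · have hn1 : (1:ℝ) ≤ n := by exact_mod_cast h1
      rw [norm_div, Complex.norm_natCast]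
      have hsn : 0 < Real.sqrt n := Real.sqrt_pos.mpr (by linarith)
      have hsn2 : Real.sqrt n ≤ n := by
        nlinarith [Real.sq_sqrt (by linarith : (0:ℝ) ≤ (n:ℝ)), Real.sqrt_nonneg (n:ℝ)]
      exact div_le_div_of_nonneg_left (norm_nonneg _) hsn hsn2
  have hg : Summable (fun n : ℕ => ξ n / (n:ℂ)) := Summable.of_norm_bounded hsum hcomp
  set B := ⌈2 * T⌉₊ with hB_def
  set S := Finset.Ico 1 B with hS_def
  -- the real inner harmonic sums
  set H : ℕ → ℝ := fun d => ∑ m ∈ Finset.Ico ⌈T/(d:ℝ)⌉₊ ⌈2*T/(d:ℝ)⌉₊, (1/(m:ℝ)) with hH_def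
  have hswap : (∑ n ∈ Finset.Ico ⌈T⌉₊ B, (∑ d ∈ n.divisors, ξ d) / (n:ℂ))
      = ∑ d ∈ S, ξ d / (d:ℂ) * ((H d : ℝ) : ℂ) := by
    rw [hB_def, show (2:ℝ) * T = 2*T from rfl, swap_lemma ξ T hT]
    refine Finset.sum_congr rfl fun d _ => ?_
    rw [hH_def]
    push_cast
    rw [Finset.mul_sum]
    refine Finset.sum_congr rfl fun m _ => ?_
    ring
  rw [hswap, ← Summable.sum_add_tsum_compl (s := S) hg]
  have e1 : (∑ d ∈ S, ξ d / (d:ℂ) * (((H d : ℝ) : ℂ) - (Real.log 2 : ℂ)))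
      = (∑ d ∈ S, ξ d / (d:ℂ) * ((H d : ℝ) : ℂ))
        - ∑ d ∈ S, (Real.log 2 : ℂ) * (ξ d / (d:ℂ)) := by
    rw [← Finset.sum_sub_distrib]
    exact Finset.sum_congr rfl fun d _ => by ring
  have hre : (∑ d ∈ S, ξ d / (d:ℂ) * ((H d : ℝ) : ℂ))
      - (Real.log 2 : ℂ) * (∑ d ∈ S, ξ d / (d:ℂ) + ∑' d : ↑((S:Set ℕ))ᶜ, ξ d / ((d:ℕ):ℂ))
      = (∑ d ∈ S, ξ d / (d:ℂ) * (((H d : ℝ) : ℂ) - (Real.log 2 : ℂ)))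
        - (Real.log 2 : ℂ) * ∑' d : ↑((S:Set ℕ))ᶜ, ξ d / ((d:ℕ):ℂ) := by
    rw [e1, mul_add, Finset.mul_sum]
    ring
  rw [hre]
  have hmain : ‖∑ d ∈ S, ξ d / (d:ℂ) * (((H d : ℝ) : ℂ) - (Real.log 2 : ℂ))‖
      ≤ 7 * M / Real.sqrt T := by
    calc ‖∑ d ∈ S, ξ d / (d:ℂ) * (((H d : ℝ) : ℂ) - (Real.log 2 : ℂ))‖
        ≤ ∑ d ∈ S, ‖ξ d / (d:ℂ) * (((H d : ℝ) : ℂ) - (Real.log 2 : ℂ))‖ :=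
          norm_sum_le _ _
      _ ≤ ∑ d ∈ S, (7 / Real.sqrt T) * (‖ξ d‖ / Real.sqrt d) := by
          refine Finset.sum_le_sum fun d hd => ?_
          have hd1 : 1 ≤ d := (Finset.mem_Ico.mp hd).1
          have hd0 : (0:ℝ) < d := by exact_mod_cast hd1
          have hsd : 0 < Real.sqrt d := Real.sqrt_pos.mpr hd0
          rw [norm_mul, norm_div, Complex.norm_natCast]
          have h1 : ‖((H d : ℝ) : ℂ) - (Real.log 2 : ℂ)‖ = |H d - Real.log 2| := by
            rw [← Complex.ofReal_sub, Complex.norm_real, Real.norm_eq_abs]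
          rw [h1]
          have h2 := key_est T hT d hd1
          have h3 : ‖ξ d‖ / (d:ℝ) * (7 * Real.sqrt d / Real.sqrt T)
              = (7 / Real.sqrt T) * (‖ξ d‖ / Real.sqrt d) := by
            field_simp
            linear_combination ‖ξ d‖ * (Real.mul_self_sqrt hd0.le)
          calc ‖ξ d‖ / (d:ℝ) * |H d - Real.log 2|
              ≤ ‖ξ d‖ / (d:ℝ) * (7 * Real.sqrt d / Real.sqrt T) := by
                refine mul_le_mul_of_nonneg_left h2 (by positivity)
            _ = (7 / Real.sqrt T) * (‖ξ d‖ / Real.sqrt d) := h3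
      _ = (7 / Real.sqrt T) * ∑ d ∈ S, (‖ξ d‖ / Real.sqrt d) := by
          rw [Finset.mul_sum]
      _ ≤ (7 / Real.sqrt T) * M := by
          refine mul_le_mul_of_nonneg_left ?_ (by positivity)
          exact le_trans (Summable.sum_le_tsum S (fun i _ => by positivity) hsum) hM
      _ = 7 * M / Real.sqrt T := by ring
  have htail : ‖(Real.log 2 : ℂ) * ∑' d : ↑((S:Set ℕ))ᶜ, ξ d / ((d:ℕ):ℂ)‖
      ≤ M / Real.sqrt T := by
    have hBT : T ≤ (B:ℝ) := by
      calc T ≤ 2*T := by linarith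
        _ ≤ (B:ℝ) := Nat.le_ceil _
    have hterm : ∀ d : ↑((S:Set ℕ))ᶜ, ‖ξ (d:ℕ) / ((d:ℕ):ℂ)‖
        ≤ (‖ξ (d:ℕ)‖ / Real.sqrt (d:ℕ)) / Real.sqrt T := by
      rintro ⟨d, hd⟩
      simp only [Set.mem_compl_iff, Finset.coe_Ico, Set.mem_Ico, not_and_or, not_le, not_lt, hS_def] at hd
      rcases hd with hd | hd
      · interval_cases d
        simp [Real.sqrt_zero]
      · -- B ≤ d
        have hdT : T ≤ (d:ℝ) := le_trans hBT (by exact_mod_cast hd)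
        have hd0 : (0:ℝ) < d := by linarith
        have hsd : 0 < Real.sqrt d := Real.sqrt_pos.mpr hd0
        rw [norm_div, Complex.norm_natCast, div_div]
        refine div_le_div_of_nonneg_left (norm_nonneg _) (by positivity) ?_
        calc Real.sqrt (d:ℝ) * Real.sqrt T ≤ Real.sqrt d * Real.sqrt d := by
              refine mul_le_mul_of_nonneg_left (Real.sqrt_le_sqrt hdT) hsd.le
          _ = (d:ℝ) := Real.mul_self_sqrt hd0.le
    have hsub : Summable (fun d : ↑((S:Set ℕ))ᶜ => ‖ξ (d:ℕ)‖ / Real.sqrt (d:ℕ) / Real.sqrt T) :=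
      ((hsum.subtype _).div_const _)
    calc ‖(Real.log 2 : ℂ) * ∑' d : ↑((S:Set ℕ))ᶜ, ξ d / ((d:ℕ):ℂ)‖
        = Real.log 2 * ‖∑' d : ↑((S:Set ℕ))ᶜ, ξ d / ((d:ℕ):ℂ)‖ := by
          rw [norm_mul, Complex.norm_real, Real.norm_eq_abs, abs_of_pos hlog2']
      _ ≤ 1 * ‖∑' d : ↑((S:Set ℕ))ᶜ, ξ d / ((d:ℕ):ℂ)‖ := by
          refine mul_le_mul_of_nonneg_right hlog2 (norm_nonneg _)
      _ = ‖∑' d : ↑((S:Set ℕ))ᶜ, ξ d / ((d:ℕ):ℂ)‖ := one_mul _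
      _ ≤ ∑' d : ↑((S:Set ℕ))ᶜ, ‖ξ (d:ℕ) / ((d:ℕ):ℂ)‖ :=
          norm_tsum_le_tsum_norm ((hg.subtype _).norm)
      _ ≤ ∑' d : ↑((S:Set ℕ))ᶜ, (‖ξ (d:ℕ)‖ / Real.sqrt (d:ℕ)) / Real.sqrt T :=
          Summable.tsum_le_tsum hterm ((hg.subtype _).norm) hsub
      _ = (∑' d : ↑((S:Set ℕ))ᶜ, ‖ξ (d:ℕ)‖ / Real.sqrt (d:ℕ)) / Real.sqrt T := tsum_div_const
      _ ≤ M / Real.sqrt T := by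
          gcongr
          exact le_trans (Summable.tsum_subtype_le (fun n : ℕ => ‖ξ n‖ / Real.sqrt n) _ (fun n => by positivity) hsum) hM
  calc ‖(∑ d ∈ S, ξ d / (d:ℂ) * (((H d : ℝ) : ℂ) - (Real.log 2 : ℂ)))
        - (Real.log 2 : ℂ) * ∑' d : ↑((S:Set ℕ))ᶜ, ξ d / ((d:ℕ):ℂ)‖
      ≤ ‖∑ d ∈ S, ξ d / (d:ℂ) * (((H d : ℝ) : ℂ) - (Real.log 2 : ℂ))‖
        + ‖(Real.log 2 : ℂ) * ∑' d : ↑((S:Set ℕ))ᶜ, ξ d / ((d:ℕ):ℂ)‖ := norm_sub_le _ _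
    _ ≤ 7 * M / Real.sqrt T + M / Real.sqrt T := add_le_add hmain htail
    _ = 8 * M / Real.sqrt T := by ring
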